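/- Write vectors in R^11 as v = (h; f_1,…,f_5; g_1,…,g_5). Let S ⊂ R^11 be the set of all vectors obtained by permuting the indices {1,…,5} in the following five vectors: (0; 1,0,0,0,0; 0,0,0,0,0), (0; 1,0,0,0,0; 1,0,0,0,0), (1; 0,0,0,0,0; 0,0,0,0,0), (1; −1,−1,−1,−1,−1; 0,0,0,0,0), (1; −2,−1,−1,0,0; −1,0,0,0,0). Then the vector (2; −3,−3,−1,−1,−1; −1,−1,0,0,0) does not belong to the convex cone generated by S. -/

import Mathlib

open scoped NNReal

/-- Numerical classes of 2-cycles on the blowup of P^4 along 5 general lines,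
written as vectors `(h; f₁,…,f₅; g₁,…,g₅)`. -/
abbrev CycleVec5 : Type := ℝ × (Fin 5 → ℝ) × (Fin 5 → ℝ)

/-- The action of a permutation of the indices `{1,…,5}` on a vector. -/
def permVec5 (σ : Equiv.Perm (Fin 5)) (v : CycleVec5) : CycleVec5 :=
  (v.1, v.2.1 ∘ σ, v.2.2 ∘ σ)

/-- The classes of linear 2-dimensional subvarieties: all index-permutations of the
five listed vectors. -/
def linClasses5 : Set CycleVec5 :=
  {w | ∃ σ : Equiv.Perm (Fin 5), w = permVec5 σ (0, ![1,0,0,0,0], ![0,0,0,0,0]) ∨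
    w = permVec5 σ (0, ![1,0,0,0,0], ![1,0,0,0,0]) ∨
    w = permVec5 σ (1, ![0,0,0,0,0], ![0,0,0,0,0]) ∨
    w = permVec5 σ (1, ![-1,-1,-1,-1,-1], ![0,0,0,0,0]) ∨
    w = permVec5 σ (1, ![-2,-1,-1,0,0], ![-1,0,0,0,0])}

/-- A separating linear functional: `L(h,f,g) = 5h + Σ fᵢ + Σ gᵢ`. -/
def Lfun (v : CycleVec5) : ℝ := 5 * v.1 + (∑ i, v.2.1 i) + (∑ i, v.2.2 i)

lemma Lfun_perm (σ : Equiv.Perm (Fin 5)) (v : CycleVec5) :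
    Lfun (permVec5 σ v) = Lfun v := by
  simp [Lfun, permVec5, Function.comp, Equiv.sum_comp σ]

/-- The half-space `{v | 0 ≤ L v}` as an `ℝ≥0`-submodule. -/
def Phalf : Submodule ℝ≥0 CycleVec5 where
  carrier := {v | 0 ≤ Lfun v}
  zero_mem' := by simp [Lfun]
  add_mem' := by
    intro a b ha hb
    have : Lfun (a + b) = Lfun a + Lfun b := by
      simp [Lfun, Prod.fst_add, Prod.snd_add, Pi.add_apply, Finset.sum_add_distrib]
      ring
    simp only [Set.mem_setOf_eq] at *
    rw [this]; linarith
  smul_mem' := by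
    intro c v hv
    have : Lfun (c • v) = (c : ℝ) * Lfun v := by
      simp [Lfun, Prod.smul_fst, Prod.smul_snd, Pi.smul_apply, NNReal.smul_def]
      rw [mul_add, mul_add, Finset.mul_sum, Finset.mul_sum]
      ring
    simp only [Set.mem_setOf_eq] at *
    rw [this]
    exact mul_nonneg c.coe_nonneg hv

lemma linClasses5_subset : linClasses5 ⊆ (Phalf : Set CycleVec5) := by
  rintro w ⟨σ, h | h | h | h | h⟩ <;> subst h <;>
    · show (0:ℝ) ≤ Lfun _
      rw [Lfun_perm]
      norm_num [Lfun, Fin.sum_univ_succ]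

/-- The class of the proper transform of a quadric surface containing two of the
five lines and meeting the other three is not in the convex cone generated by the
classes of linear 2-dimensional subvarieties: the cone of effective 2-cycles on the
blowup of P^4 along 5 general lines is not linearly generated. -/
theorem stmt14 :
    ((2 : ℝ), ![-3,-3,-1,-1,-1], ![-1,-1,0,0,0]) ∉
      Submodule.span ℝ≥0 linClasses5 := by
  intro hmem
  have hle : Submodule.span ℝ≥0 linClasses5 ≤ Phalf :=
    Submodule.span_le.mpr linClasses5_subset
  have h0 : (0:ℝ) ≤ Lfun ((2 : ℝ), ![-3,-3,-1,-1,-1], ![-1,-1,0,0,0]) := hle hmem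
  have : Lfun ((2 : ℝ), ![-3,-3,-1,-1,-1], ![-1,-1,0,0,0]) = -1 := by
    norm_num [Lfun, Fin.sum_univ_succ]
  rw [this] at h0
  norm_num at h0
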